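/- Suppose in a directed graph G on a finite vertex set V of agents, every vertex is either a source (no incoming envy edge) or reachable along envy edges from a source, and for every source s there exists a vertex c (possibly c = s) with a maximal-envy edge c ⇢ s. Then the graph whose edges are the envy edges together with the maximal-envy edges contains a directed cycle passing through at least one source vertex. -/

import Mathlib

/-- if every vertex is a source (no incoming envy edge) or reachable
from a source along envy edges, and every source has an incoming maximal-envy edge,
then envy edges together with maximal-envy edges contain a directed cycle passing
through at least one source. -/
theorem envy_graph_cycle_through_source {V : Type*} [Fintype V]
    (E E' : V → V → Prop)
    (hreach : ∀ x : V, (∀ y : V, ¬ E y x) ∨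
      ∃ s : V, (∀ y : V, ¬ E y s) ∧ Relation.ReflTransGen E s x)
    (hmax : ∀ s : V, (∀ y : V, ¬ E y s) → ∃ c : V, E' c s)
    (hne : Nonempty V) :
    ∃ (k : ℕ) (u : ℕ → V), 0 < k ∧
      (∀ t1 < k, ∀ t2 < k, u t1 = u t2 → t1 = t2) ∧
      (∀ t < k, E (u t) (u (t + 1)) ∨ E' (u t) (u (t + 1))) ∧
      u k = u 0 ∧
      ∃ t < k, ∀ y : V, ¬ E y (u t) := by
  classical
  set R : V → V → Prop := fun a b => E a b ∨ E' a b with hR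
  -- Lemma A: every source has a positive-length R-path from some source
  have lemA : ∀ s : V, (∀ y, ¬ E y s) →
      ∃ s', (∀ y, ¬ E y s') ∧ Relation.TransGen R s' s := by
    intro s hs
    obtain ⟨c, hc⟩ := hmax s hs
    rcases hreach c with hcsrc | ⟨s1, hs1, hpath⟩
    · exact ⟨c, hcsrc, Relation.TransGen.single (Or.inr hc)⟩
    · exact ⟨s1, hs1, Relation.TransGen.tail'
        (Relation.ReflTransGen.mono (fun a b h => Or.inl h) _ _ hpath) (Or.inr hc)⟩
  -- there exists a source
  obtain ⟨x⟩ := hne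
  have hsrc : ∃ s : V, ∀ y, ¬ E y s := by
    rcases hreach x with h | ⟨s, hs, _⟩
    · exact ⟨x, h⟩
    · exact ⟨s, hs⟩
  -- there is a source s with TransGen R s s
  have hclosed : ∃ s : V, (∀ y, ¬ E y s) ∧ Relation.TransGen R s s := by
    let S := {s : V // ∀ y, ¬ E y s}
    let g : S → S := fun s => ⟨(lemA s.1 s.2).choose, (lemA s.1 s.2).choose_spec.1⟩
    have hg : ∀ s : S, Relation.TransGen R (g s).1 s.1 :=
      fun s => (lemA s.1 s.2).choose_spec.2
    have hiter : ∀ n : ℕ, ∀ s : S, Relation.TransGen R (g^[n+1] s).1 s.1 := by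
      intro n
      induction n with
      | zero => intro s; simpa using hg s
      | succ n ih =>
        intro s
        rw [Function.iterate_succ_apply']
        exact (hg _).trans (ih s)
    obtain ⟨s0, hs0⟩ := hsrc
    obtain ⟨i, j, hij, heq⟩ :=
      Finite.exists_ne_map_eq_of_infinite (fun n : ℕ => g^[n] ⟨s0, hs0⟩)
    -- wlog i < j
    have key : ∀ i j : ℕ, i < j → g^[i] (⟨s0, hs0⟩ : S) = g^[j] ⟨s0, hs0⟩ →
        ∃ s : V, (∀ y, ¬ E y s) ∧ Relation.TransGen R s s := by
      intro i j hlt he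
      set s : S := g^[i] (⟨s0, hs0⟩ : S) with hsdef
      have hfix : g^[j - i] s = s := by
        rw [hsdef, ← Function.iterate_add_apply]
        have : j - i + i = j := by omega
        rw [this, ← he]
      obtain ⟨m, hm⟩ : ∃ m, j - i = m + 1 := ⟨j - i - 1, by omega⟩
      have := hiter m s
      rw [← hm, hfix] at this
      exact ⟨s.1, s.2, this⟩
    rcases lt_or_gt_of_ne hij with h | h
    · exact key i j h heq
    · exact key j i h heq.symm
  obtain ⟨s, hs, hts⟩ := hclosed
  -- convert TransGen to a walk
  have hwalk : ∀ a b : V, Relation.TransGen R a b →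
      ∃ k, 0 < k ∧ ∃ u : ℕ → V, u 0 = a ∧ u k = b ∧ ∀ t < k, R (u t) (u (t+1)) := by
    intro a b h
    induction h with
    | @single b h =>
      refine ⟨1, one_pos, fun t => if t = 0 then a else b, by simp, by simp, ?_⟩
      intro t ht
      interval_cases t
      simpa using h
    | @tail b c h e ih =>
      obtain ⟨k, hk, u, h0, hkb, hedge⟩ := ih
      refine ⟨k + 1, by omega, fun t => if t ≤ k then u t else c, by simp [h0], by simp, ?_⟩
      intro t ht
      rcases lt_or_eq_of_le (Nat.lt_succ_iff.mp ht) with h' | h'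
      · simp only [show t ≤ k by omega, show t + 1 ≤ k by omega, if_true]
        exact hedge t h'
      · subst h'
        simp only [le_refl, if_true, show ¬ (t + 1 ≤ t) by omega, if_false]
        rw [hkb]
        exact e
  obtain ⟨k0, hk0, u0, hu00, hu0k, hedge0⟩ := hwalk s s hts
  -- minimal closed walk through a source
  let P : ℕ → Prop := fun k => 0 < k ∧ ∃ u : ℕ → V,
    (∀ t < k, R (u t) (u (t+1))) ∧ u k = u 0 ∧ ∃ t < k, ∀ y, ¬ E y (u t)
  have hP : ∃ k, P k :=
    ⟨k0, hk0, u0, hedge0, by rw [hu0k, hu00], 0, hk0, by rw [hu00]; exact hs⟩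
  obtain ⟨hkpos, u, hedge, hclose, t, ht, htsrc⟩ := Nat.find_spec hP
  set k := Nat.find hP with hkdef
  have hmin : ∀ k' < k, ¬ P k' := fun k' h => Nat.find_min hP h
  refine ⟨k, u, hkpos, ?_, hedge, hclose, t, ht, htsrc⟩
  -- injectivity via splitting argument
  have modedge : ∀ j : ℕ, R (u (j % k)) (u ((j+1) % k)) := by
    intro j
    have hm : j % k < k := Nat.mod_lt _ hkpos
    have h1 : (j + 1) % k = (j % k + 1) % k := by
      conv_lhs => rw [← Nat.mod_add_mod]
    rcases lt_or_eq_of_le (Nat.succ_le_of_lt hm) with h' | h'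
    · rw [h1, Nat.mod_eq_of_lt h']
      exact hedge _ hm
    · have hk' : j % k + 1 = k := h'
      have h2 := hedge (j % k) hm
      rw [hk', hclose] at h2
      rw [h1, hk', Nat.mod_self]
      exact h2
  have key : ∀ t1 t2 : ℕ, t1 < t2 → t2 < k → u t1 ≠ u t2 := by
    intro t1 t2 h12 h2k hequ
    by_cases hsrcloc : t1 ≤ t ∧ t < t2
    · -- inner walk u(t1), ..., u(t2)
      have : P (t2 - t1) := by
        refine ⟨by omega, fun i => u (t1 + i), ?_, ?_, t - t1, by omega, ?_⟩
        · intro i hi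
          show R (u (t1 + i)) (u (t1 + (i + 1)))
          rw [show t1 + (i + 1) = t1 + i + 1 by omega]
          exact hedge _ (by omega)
        · show u (t1 + (t2 - t1)) = u (t1 + 0)
          rw [show t1 + (t2 - t1) = t2 by omega, show t1 + 0 = t1 by omega]
          exact hequ.symm
        · show ∀ y, ¬ E y (u (t1 + (t - t1)))
          rw [show t1 + (t - t1) = t by omega]
          exact htsrc
      exact hmin (t2 - t1) (by omega) this
    · -- outer walk u(t2), ..., u(k)=u(0), ..., u(t1)
      have : P (k - t2 + t1) := by
        refine ⟨by omega, fun i => u ((t2 + i) % k), ?_, ?_, ?_⟩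
        · intro i hi
          show R (u ((t2 + i) % k)) (u ((t2 + (i + 1)) % k))
          rw [show t2 + (i + 1) = (t2 + i) + 1 by omega]
          exact modedge _
        · show u ((t2 + (k - t2 + t1)) % k) = u ((t2 + 0) % k)
          rw [show t2 + (k - t2 + t1) = k + t1 by omega, Nat.add_mod_left,
            Nat.mod_eq_of_lt (by omega), show t2 + 0 = t2 by omega,
            Nat.mod_eq_of_lt h2k, ← hequ]
        · rcases (by omega : t < t1 ∨ t2 ≤ t) with h' | h'
          · refine ⟨(k - t2) + t, by omega, ?_⟩
            show ∀ y, ¬ E y (u ((t2 + ((k - t2) + t)) % k))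
            rw [show t2 + ((k - t2) + t) = k + t by omega, Nat.add_mod_left,
              Nat.mod_eq_of_lt (by omega)]
            exact htsrc
          · refine ⟨t - t2, by omega, ?_⟩
            show ∀ y, ¬ E y (u ((t2 + (t - t2)) % k))
            rw [show t2 + (t - t2) = t by omega, Nat.mod_eq_of_lt (by omega)]
            exact htsrc
      exact hmin (k - t2 + t1) (by omega) this
  intro t1 h1 t2 h2 hequ
  by_contra hne12
  rcases Nat.lt_or_ge t1 t2 with h | h
  · exact key t1 t2 h h2 hequ
  · exact key t2 t1 (by omega) h1 hequ.symm
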